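/- The linear map φ: M_4 → M_4 defined by φ(X) = 3·Tr[X]·1_4 − X is 3-positive but not 4-positive. -/

import Mathlib

open Matrix ComplexOrder Finset

/-- The map `id_k ⊗ φ` acting blockwise. -/
def blockMap {n m : ℕ} (k : ℕ)
    (φ : Matrix (Fin n) (Fin n) ℂ → Matrix (Fin m) (Fin m) ℂ)
    (M : Matrix (Fin k × Fin n) (Fin k × Fin n) ℂ) :
    Matrix (Fin k × Fin m) (Fin k × Fin m) ℂ :=
  fun p q => φ (fun a b => M (p.1, a) (q.1, b)) p.2 q.2

/-- `φ` is `k`-positive. -/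
def IsKPositive {n m : ℕ} (k : ℕ)
    (φ : Matrix (Fin n) (Fin n) ℂ → Matrix (Fin m) (Fin m) ℂ) : Prop :=
  ∀ M : Matrix (Fin k × Fin n) (Fin k × Fin n) ℂ,
    M.PosSemidef → (blockMap k φ M).PosSemidef

open Finset in
private lemma cs_sum {ι : Type*} [Fintype ι] (f h : ι → ℂ) :
    Complex.normSq (∑ i, f i * h i) ≤
      (∑ i, Complex.normSq (f i)) * (∑ i, Complex.normSq (h i)) := by
  let v : EuclideanSpace ℂ ι := (WithLp.equiv 2 (ι → ℂ)).symm (fun i => star (f i))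
  let w : EuclideanSpace ℂ ι := (WithLp.equiv 2 (ι → ℂ)).symm h
  have hva : ∀ i, v i = star (f i) := fun i => rfl
  have hwa : ∀ i, w i = h i := fun i => rfl
  have hinner : (inner ℂ v w : ℂ) = ∑ i, f i * h i := by
    rw [PiLp.inner_apply]
    refine Finset.sum_congr rfl fun i _ => ?_
    rw [RCLike.inner_apply, hva, hwa, starRingEnd_apply, star_star, mul_comm]
  have hcs := norm_inner_le_norm (𝕜 := ℂ) v w
  have hv : ‖v‖ ^ 2 = ∑ i, Complex.normSq (f i) := by
    rw [EuclideanSpace.norm_eq, Real.sq_sqrt (by positivity)]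
    refine Finset.sum_congr rfl fun i _ => ?_
    rw [hva, norm_star, Complex.sq_norm]
  have hw : ‖w‖ ^ 2 = ∑ i, Complex.normSq (h i) := by
    rw [EuclideanSpace.norm_eq, Real.sq_sqrt (by positivity)]
    refine Finset.sum_congr rfl fun i _ => ?_
    rw [hwa, Complex.sq_norm]
  calc Complex.normSq (∑ i, f i * h i) = ‖(inner ℂ v w : ℂ)‖ ^ 2 := by
        rw [hinner, Complex.sq_norm]
      _ ≤ (‖v‖ * ‖w‖) ^ 2 := by
        apply pow_le_pow_left₀ (norm_nonneg _) hcs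
      _ = (∑ i, Complex.normSq (f i)) * (∑ i, Complex.normSq (h i)) := by
        rw [mul_pow, hv, hw]

private lemma key (T : Matrix (Fin 4) (Fin 4) ℂ) (g : Fin 4 → ℂ) (hg : ∃ c, g c ≠ 0)
    (hker : ∀ a, ∑ c, T a c * g c = 0) :
    Complex.normSq (∑ a, T a a) ≤ 3 * ∑ a, ∑ c, Complex.normSq (T a c) := by
  set s : ℝ := ∑ c, Complex.normSq (g c) with hs
  have hspos : 0 < s := by
    obtain ⟨c, hc⟩ := hg
    exact Finset.sum_pos' (fun i _ => Complex.normSq_nonneg _)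
      ⟨c, Finset.mem_univ c, Complex.normSq_pos.mpr hc⟩
  set P : Fin 4 → Fin 4 → ℂ := fun c a =>
    (if c = a then (s : ℂ) else 0) - g c * starRingEnd ℂ (g a) with hP
  have htr : ∑ a, ∑ c, T a c * P c a = (s : ℂ) * ∑ a, T a a := by
    rw [Finset.mul_sum]
    refine Finset.sum_congr rfl fun a _ => ?_
    have step : ∑ c, T a c * P c a
        = (∑ c, T a c * (if c = a then (s : ℂ) else 0))
          - (∑ c, T a c * g c) * starRingEnd ℂ (g a) := by
      rw [Finset.sum_mul, ← Finset.sum_sub_distrib]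
      refine Finset.sum_congr rfl fun c _ => ?_
      simp only [hP]
      by_cases h : c = a <;> simp [h] <;> ring
    rw [step, hker, zero_mul, sub_zero]
    have : ∀ c ∈ (univ : Finset (Fin 4)),
        T a c * (if c = a then (s : ℂ) else 0) = if c = a then T a a * (s:ℂ) else 0 := by
      intro c _; by_cases h : c = a <;> simp [h]
    rw [Finset.sum_congr rfl this, Finset.sum_ite_eq' univ a]
    simp [mul_comm]
  have hPnorm : ∑ c, ∑ a, Complex.normSq (P c a) = 3 * s ^ 2 := by
    have hent : ∀ c a, Complex.normSq (P c a) =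
        (if c = a then s ^ 2 - 2 * (s * Complex.normSq (g c)) else 0)
          + Complex.normSq (g c) * Complex.normSq (g a) := by
      intro c a
      by_cases hca : c = a
      · subst hca
        have : P c c = ((s - Complex.normSq (g c) : ℝ) : ℂ) := by
          simp [hP, Complex.mul_conj]
        rw [this, Complex.normSq_ofReal]
        simp; ring
      · have : P c a = -(g c * starRingEnd ℂ (g a)) := by simp [hP, hca]
        rw [this, Complex.normSq_neg, Complex.normSq_mul, Complex.normSq_conj]
        simp [hca]
    calc ∑ c, ∑ a, Complex.normSq (P c a)
        = ∑ c, ∑ a, ((if c = a then s ^ 2 - 2 * (s * Complex.normSq (g c)) else 0)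
          + Complex.normSq (g c) * Complex.normSq (g a)) :=
          Finset.sum_congr rfl fun c _ => Finset.sum_congr rfl fun a _ => hent c a
      _ = ∑ c : Fin 4, (s ^ 2 - s * Complex.normSq (g c)) := by
          refine Finset.sum_congr rfl fun c _ => ?_
          rw [Finset.sum_add_distrib, Finset.sum_ite_eq univ c, ← Finset.mul_sum, ← hs]
          simp; ring
      _ = 3 * s ^ 2 := by
          rw [Finset.sum_sub_distrib, Finset.sum_const, ← Finset.mul_sum, ← hs]
          simp [Finset.card_univ]; ring
  have hcs := cs_sum (ι := Fin 4 × Fin 4) (fun p => T p.1 p.2) (fun p => P p.2 p.1)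
  simp only [Fintype.sum_prod_type] at hcs
  rw [htr] at hcs
  have h2 : ∑ a : Fin 4, ∑ c : Fin 4, Complex.normSq (P c a) = 3 * s ^ 2 := by
    rw [Finset.sum_comm]; exact hPnorm
  rw [h2, Complex.normSq_mul, Complex.normSq_ofReal] at hcs
  have hN : 0 ≤ ∑ a, ∑ c, Complex.normSq (T a c) :=
    Finset.sum_nonneg fun a _ => Finset.sum_nonneg fun c _ => Complex.normSq_nonneg _
  nlinarith [hcs, hspos, hN, mul_pos hspos hspos, Complex.normSq_nonneg (∑ a, T a a)]

private lemma lemA (x u : Fin 3 → Fin 4 → ℂ) :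
    Complex.normSq (∑ a, ∑ i, u i a * x i a) ≤
      3 * ∑ a, ∑ c, Complex.normSq (∑ i, u i c * x i a) := by
  set T : Matrix (Fin 4) (Fin 4) ℂ := fun a c => ∑ i, u i c * x i a with hT
  -- the 4 coefficient vectors (fun i => u i c) in ℂ³ are linearly dependent
  have hdep : ¬ LinearIndependent ℂ (fun c : Fin 4 => (fun i => u i c : Fin 3 → ℂ)) := by
    intro hli
    have := hli.fintype_card_le_finrank
    rw [Module.finrank_fin_fun] at this
    simp at this
  obtain ⟨g, hsum, c₀, hc₀⟩ := Fintype.not_linearIndependent_iff.mp hdep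
  have hker : ∀ a, ∑ c, T a c * g c = 0 := by
    intro a
    have hcoef : ∀ i, ∑ c, g c * u i c = 0 := by
      intro i
      have := congrFun hsum i
      simpa [Finset.sum_apply] using this
    calc ∑ c, T a c * g c = ∑ c, ∑ i, g c * u i c * x i a := by
          refine Finset.sum_congr rfl fun c _ => ?_
          rw [hT, Finset.sum_mul]
          exact Finset.sum_congr rfl fun i _ => by ring
      _ = ∑ i, (∑ c, g c * u i c) * x i a := by
          rw [Finset.sum_comm]
          exact Finset.sum_congr rfl fun i _ => by rw [Finset.sum_mul]
      _ = 0 := by simp [hcoef]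
  have hdiag : ∑ a, T a a = ∑ a, ∑ i, u i a * x i a := rfl
  have := key T g ⟨c₀, hc₀⟩ hker
  rw [hdiag] at this
  exact this

private lemma swap4 {α β γ δ N : Type*} [Fintype α] [Fintype β] [Fintype γ] [Fintype δ]
    [AddCommMonoid N] (F : α → β → γ → δ → N) :
    ∑ i, ∑ j, ∑ c, ∑ r, F i j c r = ∑ c, ∑ r, ∑ i, ∑ j, F i j c r :=
  calc ∑ i, ∑ j, ∑ c, ∑ r, F i j c r
      = ∑ i, ∑ c, ∑ j, ∑ r, F i j c r :=
        Finset.sum_congr rfl fun i _ => Finset.sum_comm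
    _ = ∑ c, ∑ i, ∑ j, ∑ r, F i j c r := Finset.sum_comm
    _ = ∑ c, ∑ i, ∑ r, ∑ j, F i j c r :=
        Finset.sum_congr rfl fun c _ => Finset.sum_congr rfl fun i _ => Finset.sum_comm
    _ = ∑ c, ∑ r, ∑ i, ∑ j, F i j c r :=
        Finset.sum_congr rfl fun c _ => Finset.sum_comm

private lemma swap3 {α β γ N : Type*} [Fintype α] [Fintype β] [Fintype γ]
    [AddCommMonoid N] (F : α → β → γ → N) :
    ∑ a, ∑ c, ∑ r, F a c r = ∑ r, ∑ a, ∑ c, F a c r :=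
  calc ∑ a, ∑ c, ∑ r, F a c r
      = ∑ a, ∑ r, ∑ c, F a c r := Finset.sum_congr rfl fun a _ => Finset.sum_comm
    _ = ∑ r, ∑ a, ∑ c, F a c r := Finset.sum_comm

/-- Choi's map `X ↦ 3 Tr[X]·1 − X` on `M₄` is `3`-positive but not `4`-positive. -/
theorem choi_map_three_positive_not_four_positive :
    IsKPositive 3 (fun X : Matrix (Fin 4) (Fin 4) ℂ =>
        ((3 : ℂ) * X.trace) • (1 : Matrix (Fin 4) (Fin 4) ℂ) - X) ∧
      ¬ IsKPositive 4 (fun X : Matrix (Fin 4) (Fin 4) ℂ =>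
        ((3 : ℂ) * X.trace) • (1 : Matrix (Fin 4) (Fin 4) ℂ) - X) := by
  have part1 : IsKPositive 3 (fun X : Matrix (Fin 4) (Fin 4) ℂ =>
          ((3 : ℂ) * X.trace) • (1 : Matrix (Fin 4) (Fin 4) ℂ) - X) := by
    intro M hM
    have hB' : ∃ B : Matrix (Fin 3 × Fin 4) (Fin 3 × Fin 4) ℂ, M = Bᴴ * B := by
      classical
      open scoped MatrixOrder in
      exact CStarAlgebra.nonneg_iff_eq_star_mul_self.mp hM.nonneg
    obtain ⟨B, hB⟩ := hB'
    set φ : Matrix (Fin 4) (Fin 4) ℂ → Matrix (Fin 4) (Fin 4) ℂ :=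
      fun X => ((3 : ℂ) * X.trace) • (1 : Matrix (Fin 4) (Fin 4) ℂ) - X with hφ
    set Mt : Matrix (Fin 3) (Fin 3) ℂ := fun i j => ∑ c, M (i, c) (j, c) with hMt
    have hC : ∀ p q : Fin 3 × Fin 4, blockMap 3 φ M p q
        = 3 * Mt p.1 q.1 * (if p.2 = q.2 then 1 else 0) - M p q := by
      intro p q
      simp only [blockMap, hφ, hMt, Matrix.sub_apply, Matrix.smul_apply, Matrix.one_apply,
        Matrix.trace, Matrix.diag, smul_eq_mul, Prod.mk.eta]
      rfl
    have hMB : ∀ (i j : Fin 3) (c : Fin 4),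
        M (i, c) (j, c) = ∑ r, starRingEnd ℂ (B r (i, c)) * B r (j, c) := by
      intro i j c
      rw [hB, Matrix.mul_apply]
      exact Finset.sum_congr rfl fun r _ => by
        rw [Matrix.conjTranspose_apply, starRingEnd_apply]
    have hMentry : ∀ p q, starRingEnd ℂ (M q p) = M p q := by
      intro p q
      have h2 := congrFun (congrFun hM.1 p) q
      rw [Matrix.conjTranspose_apply] at h2
      rw [starRingEnd_apply]
      exact h2
    refine Matrix.PosSemidef.of_dotProduct_mulVec_nonneg ?_ ?_
    · ext p q
      rw [Matrix.conjTranspose_apply, hC q p, hC p q, ← starRingEnd_apply, map_sub,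
        _root_.map_mul, _root_.map_mul]
      congr 1
      · congr 1
        · congr 1
          · exact map_ofNat _ 3
          · rw [hMt, map_sum]
            exact Finset.sum_congr rfl fun c _ => hMentry (p.1, c) (q.1, c)
        · by_cases h : p.2 = q.2 <;> simp [h, eq_comm]
      · exact hMentry p q
    · intro y
      set T : (Fin 3 × Fin 4) → Fin 4 → Fin 4 → ℂ :=
        fun r a c => ∑ i, B r (i, c) * y (i, a) with hT
      set S : (Fin 3 × Fin 4) → ℂ := fun r => ∑ q, B r q * y q with hS
      -- second piece
      have hQ2 : star y ⬝ᵥ M *ᵥ y = ∑ r, starRingEnd ℂ (S r) * S r := by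
        rw [hB, ← Matrix.mulVec_mulVec, Matrix.dotProduct_mulVec, Matrix.vecMul_conjTranspose,
          star_star]
        refine Finset.sum_congr rfl fun r _ => ?_
        rw [Pi.star_apply, starRingEnd_apply]
        rfl
      -- first piece, per `a`
      have hMtform : ∀ a : Fin 4,
          (∑ i, starRingEnd ℂ (y (i, a)) * ∑ j, Mt i j * y (j, a))
            = ∑ c, ∑ r, starRingEnd ℂ (T r a c) * T r a c := by
        intro a
        calc (∑ i, starRingEnd ℂ (y (i, a)) * ∑ j, Mt i j * y (j, a))
            = ∑ i, ∑ j, ∑ c, ∑ r, (starRingEnd ℂ (B r (i, c)) * starRingEnd ℂ (y (i, a)))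
                * (B r (j, c) * y (j, a)) := by
              refine Finset.sum_congr rfl fun i _ => ?_
              rw [Finset.mul_sum]
              refine Finset.sum_congr rfl fun j _ => ?_
              rw [hMt]
              simp only [hMB i j, Finset.sum_mul, Finset.mul_sum]
              exact Finset.sum_congr rfl fun c _ => Finset.sum_congr rfl fun r _ => by ring
          _ = ∑ c, ∑ r, ∑ i, ∑ j, (starRingEnd ℂ (B r (i, c)) * starRingEnd ℂ (y (i, a)))
                * (B r (j, c) * y (j, a)) := swap4 _
          _ = ∑ c, ∑ r, starRingEnd ℂ (T r a c) * T r a c := by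
              refine Finset.sum_congr rfl fun c _ => Finset.sum_congr rfl fun r _ => ?_
              rw [hT, map_sum, Finset.sum_mul_sum]
              refine Finset.sum_congr rfl fun i _ => Finset.sum_congr rfl fun j _ => ?_
              rw [_root_.map_mul]
      -- the ite collapse
      have hA : (∑ p : Fin 3 × Fin 4, ∑ q : Fin 3 × Fin 4,
            star (y p) * ((3 * Mt p.1 q.1 * (if p.2 = q.2 then 1 else 0)) * y q))
          = 3 * ∑ a, ∑ i, starRingEnd ℂ (y (i, a)) * ∑ j, Mt i j * y (j, a) := by
        simp only [Fintype.sum_prod_type]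
        calc (∑ i : Fin 3, ∑ a : Fin 4, ∑ j : Fin 3, ∑ b : Fin 4,
                star (y (i, a)) * ((3 * Mt i j * (if a = b then 1 else 0)) * y (j, b)))
            = ∑ i : Fin 3, ∑ a : Fin 4, ∑ j : Fin 3, ∑ b : Fin 4,
                (if a = b then star (y (i, a)) * (3 * (Mt i j * y (j, b))) else 0) := by
              refine Finset.sum_congr rfl fun i _ => Finset.sum_congr rfl fun a _ =>
                Finset.sum_congr rfl fun j _ => Finset.sum_congr rfl fun b _ => ?_
              by_cases h : a = b
              · rw [if_pos h, if_pos h]; ring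
              · rw [if_neg h, if_neg h]; ring
          _ = ∑ i : Fin 3, ∑ a : Fin 4, ∑ j : Fin 3,
                star (y (i, a)) * (3 * (Mt i j * y (j, a))) := by
              refine Finset.sum_congr rfl fun i _ => Finset.sum_congr rfl fun a _ =>
                Finset.sum_congr rfl fun j _ => ?_
              rw [Finset.sum_ite_eq univ a]
              simp
          _ = 3 * ∑ a, ∑ i, starRingEnd ℂ (y (i, a)) * ∑ j, Mt i j * y (j, a) := by
              rw [Finset.mul_sum, Finset.sum_comm]
              refine Finset.sum_congr rfl fun i _ => ?_
              rw [Finset.mul_sum]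
              refine Finset.sum_congr rfl fun a _ => ?_
              rw [Finset.mul_sum, Finset.mul_sum]
              refine Finset.sum_congr rfl fun j _ => ?_
              rw [starRingEnd_apply]
              ring
      -- the main split
      have hQ : star y ⬝ᵥ (blockMap 3 φ M) *ᵥ y
          = 3 * (∑ a, ∑ i, starRingEnd ℂ (y (i, a)) * ∑ j, Mt i j * y (j, a))
            - star y ⬝ᵥ M *ᵥ y := by
        rw [← hA]
        have hdot : ∀ (A : Matrix (Fin 3 × Fin 4) (Fin 3 × Fin 4) ℂ),
            star y ⬝ᵥ A *ᵥ y = ∑ p, ∑ q, star (y p) * (A p q * y q) := by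
          intro A
          simp only [dotProduct, Matrix.mulVec, Pi.star_apply, Finset.mul_sum]
        rw [hdot, hdot, ← Finset.sum_sub_distrib]
        refine Finset.sum_congr rfl fun p _ => ?_
        rw [← Finset.sum_sub_distrib]
        refine Finset.sum_congr rfl fun q _ => ?_
        rw [hC p q]
        ring
      -- assemble
      rw [hQ, hQ2]
      have hform : (3 : ℂ) * (∑ a, ∑ i, starRingEnd ℂ (y (i, a)) * ∑ j, Mt i j * y (j, a))
            - ∑ r, starRingEnd ℂ (S r) * S r
          = ∑ r, ((3 : ℂ) * ∑ a, ∑ c, starRingEnd ℂ (T r a c) * T r a c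
              - starRingEnd ℂ (S r) * S r) := by
        rw [Finset.sum_congr rfl fun a (_ : a ∈ univ) => hMtform a]
        rw [show (∑ a : Fin 4, ∑ c : Fin 4, ∑ r, starRingEnd ℂ (T r a c) * T r a c)
            = ∑ r, ∑ a : Fin 4, ∑ c : Fin 4, starRingEnd ℂ (T r a c) * T r a c from swap3 _]
        rw [Finset.mul_sum, ← Finset.sum_sub_distrib]
      rw [hform]
      have hterm : ∀ r, ((3 : ℂ) * ∑ a, ∑ c, starRingEnd ℂ (T r a c) * T r a c
          - starRingEnd ℂ (S r) * S r)
          = ((3 * (∑ a, ∑ c, Complex.normSq (T r a c)) - Complex.normSq (S r) : ℝ) : ℂ) := by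
        intro r
        simp only [← Complex.normSq_eq_conj_mul_self]
        push_cast
        norm_num
      rw [Finset.sum_congr rfl fun r (_ : r ∈ univ) => hterm r]
      refine Finset.sum_nonneg fun r _ => ?_
      rw [Complex.zero_le_real]
      have h1 : Complex.normSq (∑ a : Fin 4, ∑ i : Fin 3, B r (i, a) * y (i, a))
          ≤ 3 * ∑ a : Fin 4, ∑ c : Fin 4, Complex.normSq (∑ i : Fin 3, B r (i, c) * y (i, a)) :=
        lemA (fun i a => y (i, a)) (fun i c => B r (i, c))
      have hSr : S r = ∑ a : Fin 4, ∑ i : Fin 3, B r (i, a) * y (i, a) := by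
        have h0 : S r = ∑ q : Fin 3 × Fin 4, B r q * y q := rfl
        rw [h0, Fintype.sum_prod_type]
        exact Finset.sum_comm
      have hTr : ∀ a c, T r a c = ∑ i : Fin 3, B r (i, c) * y (i, a) := fun a c => rfl
      simp only [hTr, hSr]
      linarith [h1]
  have part2 : ¬ IsKPositive 4 (fun X : Matrix (Fin 4) (Fin 4) ℂ =>
          ((3 : ℂ) * X.trace) • (1 : Matrix (Fin 4) (Fin 4) ℂ) - X) := by
    intro h
    set w : Fin 4 × Fin 4 → ℂ := fun p => if p.1 = p.2 then 1 else 0 with hw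
    set M : Matrix (Fin 4 × Fin 4) (Fin 4 × Fin 4) ℂ := fun p q => w p * w q with hMdef
    have hwreal : ∀ p, starRingEnd ℂ (w p) = w p := by
      intro p; rw [hw]; by_cases hp : p.1 = p.2 <;> simp [hp]
    have hM : M.PosSemidef := by
      refine Matrix.PosSemidef.of_dotProduct_mulVec_nonneg ?_ ?_
      · ext p q
        rw [Matrix.conjTranspose_apply, hMdef]
        rw [← starRingEnd_apply, map_mul (starRingEnd ℂ), hwreal, hwreal]
        ring
      · intro x
        have hrhs : starRingEnd ℂ (∑ q, w q * x q) * (∑ q, w q * x q)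
            = ∑ p, ∑ q, star (x p) * (w p * w q * x q) := by
          rw [map_sum, Finset.sum_mul]
          refine Finset.sum_congr rfl fun p _ => ?_
          rw [Finset.mul_sum]
          refine Finset.sum_congr rfl fun q _ => ?_
          rw [map_mul (starRingEnd ℂ), hwreal, starRingEnd_apply]
          ring
        have hform : star x ⬝ᵥ M *ᵥ x
            = starRingEnd ℂ (∑ q, w q * x q) * (∑ q, w q * x q) := by
          rw [hrhs]
          simp only [dotProduct, Matrix.mulVec, hMdef, Pi.star_apply, Finset.mul_sum, mul_assoc]
        rw [hform, ← Complex.normSq_eq_conj_mul_self]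
        exact Complex.zero_le_real.mpr (Complex.normSq_nonneg _)
    have hval := (h M hM).dotProduct_mulVec_nonneg w
    have hcomp : star w ⬝ᵥ (blockMap 4 (fun X : Matrix (Fin 4) (Fin 4) ℂ =>
          ((3 : ℂ) * X.trace) • (1 : Matrix (Fin 4) (Fin 4) ℂ) - X) M) *ᵥ w = (-4 : ℂ) := by
      have hbm : ∀ p q, blockMap 4 (fun X : Matrix (Fin 4) (Fin 4) ℂ =>
          ((3 : ℂ) * X.trace) • (1 : Matrix (Fin 4) (Fin 4) ℂ) - X) M p q
          = 3 * (∑ a, M (p.1, a) (q.1, a)) * (if p.2 = q.2 then 1 else 0) - M p q :=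
        fun p q => rfl
      simp only [dotProduct, Matrix.mulVec, hbm]
      simp only [dotProduct, Matrix.mulVec, blockMap, hMdef, hw, Matrix.trace, Matrix.sub_apply,
        Matrix.smul_apply, Matrix.one_apply, Matrix.diag, smul_eq_mul, Pi.star_apply,
        Fintype.sum_prod_type]
      simp [Fin.sum_univ_four]
      norm_num
    rw [hcomp] at hval
    rw [Complex.le_def] at hval
    norm_num at hval
  exact ⟨part1, part2⟩
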